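/- Let S1 be a self-adjoint operator on a finite-dimensional complex inner product space whose distinct eigenvalues λ_1 > λ_2 > … > λ_n (n ≥ 2) satisfy λ_k − λ_{k+1} = c > 0 for all k and λ_k = −λ_{n+1−k} for all k, and whose eigenspace dimensions d_k satisfy d_k ≤ d_{k+1} for 1 ≤ k ≤ ⌊n/2⌋ and d_k = d_{n+1−k} for all k. Then there exist self-adjoint operators S2 and S3 on the same space such that (S1, S2, S3) satisfies the su(2) relations with constant c. -/

import Mathlib

open scoped ComplexInnerProductSpace

open Module LinearMap

private lemma sigma_fin_eq {n : ℕ} {d : Fin n → ℕ} {p q : Σ k : Fin n, Fin (d k)}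
    (h1 : p.1.1 = q.1.1) (h2 : p.2.1 = q.2.1) : p = q := by
  rcases p with ⟨⟨k, hk⟩, i, hi⟩
  rcases q with ⟨⟨k', hk'⟩, i', hi'⟩
  dsimp at h1 h2
  subst h1
  subst h2
  rfl

set_option maxHeartbeats 1000000 in
private lemma ladder_construction
    {V : Type*} [NormedAddCommGroup V] [InnerProductSpace ℂ V] [FiniteDimensional ℂ V]
    (n : ℕ) (c : ℝ) (d : ℕ → ℕ)
    (b : OrthonormalBasis (Σ k : Fin n, Fin (d (k.val + 1))) ℂ V)
    (S1 : V →ₗ[ℂ] V) (lam : ℕ → ℝ) (t : ℕ → ℕ → ℝ)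
    (hS1b : ∀ p : (Σ k : Fin n, Fin (d (k.val + 1))),
      S1 (b p) = ((lam (p.1.val + 1) : ℝ) : ℂ) • b p)
    (hgap : ∀ k, 2 ≤ k → k ≤ n → lam (k - 1) - lam k = c)
    (hrec : ∀ p : (Σ k : Fin n, Fin (d (k.val + 1))),
      t (p.1.val + 2) p.2.val * t (p.1.val + 2) p.2.val
        - t (p.1.val + 1) p.2.val * t (p.1.val + 1) p.2.val = 2 * c * lam (p.1.val + 1))
    (hup : ∀ p : (Σ k : Fin n, Fin (d (k.val + 1))), t (p.1.val + 1) p.2.val ≠ 0 →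
      1 ≤ p.1.val ∧ p.2.val < d p.1.val)
    (hdn : ∀ p : (Σ k : Fin n, Fin (d (k.val + 1))), t (p.1.val + 2) p.2.val ≠ 0 →
      p.1.val + 1 < n ∧ p.2.val < d (p.1.val + 2)) :
    ∃ S2 S3 : V →ₗ[ℂ] V, S2.IsSymmetric ∧ S3.IsSymmetric ∧
      S2 * S3 - S3 * S2 = (Complex.I * (c : ℂ)) • S1 ∧
      S3 * S1 - S1 * S3 = (Complex.I * (c : ℂ)) • S2 ∧
      S1 * S2 - S2 * S1 = (Complex.I * (c : ℂ)) • S3 := by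
  classical
  set ι := (Σ k : Fin n, Fin (d (k.val + 1))) with hι
  have hisLt : ∀ p : ι, p.2.val < d (p.1.val + 1) := fun p => p.2.isLt
  have hite : ∀ p q : ι, ⟪b p, b q⟫ = if p = q then 1 else 0 :=
    fun p q => orthonormal_iff_ite.mp b.orthonormal p q
  set fA : ι → V := fun p =>
    if h : 1 ≤ p.1.val ∧ p.2.val < d p.1.val then
      ((t (p.1.val + 1) p.2.val : ℝ) : ℂ) •
        b ⟨⟨p.1.val - 1, by have := p.1.isLt; omega⟩,
           ⟨p.2.val, lt_of_lt_of_eq h.2 (congrArg d (Nat.sub_add_cancel h.1)).symm⟩⟩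
    else 0 with hfA
  set fA' : ι → V := fun p =>
    if h : p.1.val + 1 < n ∧ p.2.val < d (p.1.val + 2) then
      ((t (p.1.val + 2) p.2.val : ℝ) : ℂ) •
        b ⟨⟨p.1.val + 1, h.1⟩, ⟨p.2.val, h.2⟩⟩
    else 0 with hfA'
  set A : V →ₗ[ℂ] V := b.toBasis.constr ℂ fA with hAdef
  set A' : V →ₗ[ℂ] V := b.toBasis.constr ℂ fA' with hA'def
  have hAb : ∀ p, A (b p) = fA p := fun p => by
    rw [hAdef]
    simpa using b.toBasis.constr_basis ℂ fA p
  have hA'b : ∀ p, A' (b p) = fA' p := fun p => by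
    rw [hA'def]
    simpa using b.toBasis.constr_basis ℂ fA' p
  have hAstep : ∀ p q : ι, q.1.val + 1 = p.1.val → q.2.val = p.2.val →
      A (b p) = ((t (p.1.val + 1) p.2.val : ℝ) : ℂ) • b q := by
    intro p q h1' h2'
    have hcond : 1 ≤ p.1.val ∧ p.2.val < d p.1.val := by
      have h3 := hisLt q
      have h4 : d (q.1.val + 1) = d p.1.val := congrArg d h1'
      exact ⟨by omega, by omega⟩
    rw [hAb p, hfA]
    simp only [dif_pos hcond]
    congr 1
    exact congrArg b (sigma_fin_eq (by simp; omega) (by simp [h2'.symm]))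
  have hA'step : ∀ p q : ι, p.1.val + 1 = q.1.val → p.2.val = q.2.val →
      A' (b p) = ((t (p.1.val + 2) p.2.val : ℝ) : ℂ) • b q := by
    intro p q h1' h2'
    have hcond : p.1.val + 1 < n ∧ p.2.val < d (p.1.val + 2) := by
      have hq := q.1.isLt
      have h3 := hisLt q
      have h4 : d (q.1.val + 1) = d (p.1.val + 2) := congrArg d (by omega)
      exact ⟨by omega, by omega⟩
    rw [hA'b p, hfA']
    simp only [dif_pos hcond]
    congr 1
    exact congrArg b (sigma_fin_eq (by simp [h1']) (by simp [h2']))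
  have hAzero : ∀ p : ι, ¬(1 ≤ p.1.val ∧ p.2.val < d p.1.val) → A (b p) = 0 := by
    intro p h
    rw [hAb p, hfA]
    simp only [dif_neg h]
  have hA'zero : ∀ p : ι, ¬(p.1.val + 1 < n ∧ p.2.val < d (p.1.val + 2)) → A' (b p) = 0 := by
    intro p h
    rw [hA'b p, hfA']
    simp only [dif_neg h]
  have htA : ∀ p : ι, ¬(1 ≤ p.1.val ∧ p.2.val < d p.1.val) → t (p.1.val + 1) p.2.val = 0 := by
    intro p h
    by_contra h0
    exact h (hup p h0)
  have htA' : ∀ p : ι,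
      ¬(p.1.val + 1 < n ∧ p.2.val < d (p.1.val + 2)) → t (p.1.val + 2) p.2.val = 0 := by
    intro p h
    by_contra h0
    exact h (hdn p h0)
  -- ### the three commutation relations for A, A'
  have hR1 : S1 * A - A * S1 = ((c : ℝ) : ℂ) • A := by
    refine b.toBasis.ext fun p => ?_
    simp only [LinearMap.sub_apply, Module.End.mul_apply, LinearMap.smul_apply,
      OrthonormalBasis.coe_toBasis]
    rw [hS1b p, map_smul]
    by_cases h : 1 ≤ p.1.val ∧ p.2.val < d p.1.val
    · have hq2 : p.2.val < d (p.1.val - 1 + 1) := by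
        rw [Nat.sub_add_cancel h.1]; exact h.2
      set q : ι := ⟨⟨p.1.val - 1, by have := p.1.isLt; omega⟩, ⟨p.2.val, hq2⟩⟩ with hqdef
      have hstep := hAstep p q (by simp [hqdef]; omega) (by rw [hqdef])
      rw [hstep, map_smul, hS1b q]
      have hg : lam (q.1.val + 1) = lam (p.1.val + 1) + c := by
        have hgg := hgap (p.1.val + 1) (by omega) (by have := p.1.isLt; omega)
        have he : q.1.val + 1 = p.1.val + 1 - 1 := by simp [hqdef]; omega
        rw [he]
        linarith
      rw [hg]
      push_cast
      match_scalars
      ring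
    · rw [hAzero p h]
      simp
  have hR2 : S1 * A' - A' * S1 = ((-c : ℝ) : ℂ) • A' := by
    refine b.toBasis.ext fun p => ?_
    simp only [LinearMap.sub_apply, Module.End.mul_apply, LinearMap.smul_apply,
      OrthonormalBasis.coe_toBasis]
    rw [hS1b p, map_smul]
    by_cases h : p.1.val + 1 < n ∧ p.2.val < d (p.1.val + 2)
    · set q : ι := ⟨⟨p.1.val + 1, h.1⟩, ⟨p.2.val, h.2⟩⟩ with hqdef
      have hstep := hA'step p q (by simp [hqdef]) (by rw [hqdef])
      rw [hstep, map_smul, hS1b q]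
      have hg : lam (q.1.val + 1) = lam (p.1.val + 1) - c := by
        have hgg := hgap (p.1.val + 2) (by omega) (by have := q.1.isLt; simp [hqdef] at *; omega)
        have he : q.1.val + 1 = p.1.val + 2 := by simp [hqdef]
        rw [he]
        have he2 : p.1.val + 2 - 1 = p.1.val + 1 := by omega
        rw [he2] at hgg
        linarith
      rw [hg]
      push_cast
      match_scalars
      ring
    · rw [hA'zero p h]
      simp
  have hAA' : ∀ p : ι,
      A (A' (b p)) = ((t (p.1.val + 2) p.2.val * t (p.1.val + 2) p.2.val : ℝ) : ℂ) • b p := by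
    intro p
    by_cases h : p.1.val + 1 < n ∧ p.2.val < d (p.1.val + 2)
    · set q : ι := ⟨⟨p.1.val + 1, h.1⟩, ⟨p.2.val, h.2⟩⟩ with hqdef
      have hstep := hA'step p q (by simp [hqdef]) (by rw [hqdef])
      rw [hstep, map_smul]
      have hstep2 := hAstep q p (by simp [hqdef]) (by rw [hqdef])
      rw [hstep2, smul_smul]
      have he : q.1.val + 1 = p.1.val + 2 := by simp [hqdef]
      have he2 : q.2.val = p.2.val := by rw [hqdef]
      rw [he2, he, ← Complex.ofReal_mul]
    · rw [hA'zero p h, map_zero, htA' p h]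
      simp
  have hA'A : ∀ p : ι,
      A' (A (b p)) = ((t (p.1.val + 1) p.2.val * t (p.1.val + 1) p.2.val : ℝ) : ℂ) • b p := by
    intro p
    by_cases h : 1 ≤ p.1.val ∧ p.2.val < d p.1.val
    · have hq2 : p.2.val < d (p.1.val - 1 + 1) := by
        rw [Nat.sub_add_cancel h.1]; exact h.2
      set q : ι := ⟨⟨p.1.val - 1, by have := p.1.isLt; omega⟩, ⟨p.2.val, hq2⟩⟩ with hqdef
      have hstep := hAstep p q (by simp [hqdef]; omega) (by rw [hqdef])
      rw [hstep, map_smul]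
      have hstep2 := hA'step q p (by simp [hqdef]; omega) (by rw [hqdef])
      rw [hstep2, smul_smul]
      have he : q.1.val + 2 = p.1.val + 1 := by simp [hqdef]; omega
      have he2 : q.2.val = p.2.val := by rw [hqdef]
      rw [he2, he, ← Complex.ofReal_mul]
    · rw [hAzero p h, map_zero, htA p h]
      simp
  have hR3 : A * A' - A' * A = ((2 * c : ℝ) : ℂ) • S1 := by
    refine b.toBasis.ext fun p => ?_
    simp only [LinearMap.sub_apply, Module.End.mul_apply, LinearMap.smul_apply,
      OrthonormalBasis.coe_toBasis]
    rw [hAA' p, hA'A p, hS1b p]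
    have hr := hrec p
    have hrC : ((t (p.1.val + 2) p.2.val * t (p.1.val + 2) p.2.val
        - t (p.1.val + 1) p.2.val * t (p.1.val + 1) p.2.val : ℝ) : ℂ)
        = ((2 * c : ℝ) : ℂ) * ((lam (p.1.val + 1) : ℝ) : ℂ) := by
      exact_mod_cast congrArg Complex.ofReal hr
    rw [smul_smul, ← sub_smul, ← Complex.ofReal_mul, ← Complex.ofReal_sub, hrC, mul_smul]
    rw [smul_smul]
    norm_cast
  -- ### adjointness
  have hadj : A' = LinearMap.adjoint A := by
    rw [LinearMap.eq_adjoint_iff_basis b.toBasis b.toBasis]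
    intro p q
    simp only [OrthonormalBasis.coe_toBasis]
    by_cases hrel : p.1.val + 1 = q.1.val ∧ p.2.val = q.2.val
    · rw [hA'step p q hrel.1 hrel.2, hAstep q p hrel.1 hrel.2]
      rw [inner_smul_left, inner_smul_right, hite q q, hite p p]
      simp only [if_pos rfl, mul_one, Complex.conj_ofReal]
      rw [← hrel.2, show q.1.val + 1 = p.1.val + 2 from by omega]
    · have hL : ⟪A' (b p), b q⟫ = 0 := by
        by_cases h : p.1.val + 1 < n ∧ p.2.val < d (p.1.val + 2)
        · set q0 : ι := ⟨⟨p.1.val + 1, h.1⟩, ⟨p.2.val, h.2⟩⟩ with hq0def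
          rw [hA'step p q0 (by simp [hq0def]) (by rw [hq0def])]
          rw [inner_smul_left, hite q0 q]
          have hne : q0 ≠ q := by
            intro hcon
            apply hrel
            constructor
            · have := congrArg (fun r : ι => r.1.val) hcon
              simpa [hq0def] using this
            · have := congrArg (fun r : ι => r.2.val) hcon
              simpa [hq0def] using this
          rw [if_neg hne, mul_zero]
        · rw [hA'zero p h, inner_zero_left]
      have hRz : ⟪b p, A (b q)⟫ = 0 := by
        by_cases h : 1 ≤ q.1.val ∧ q.2.val < d q.1.val
        · have hq2 : q.2.val < d (q.1.val - 1 + 1) := by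
            rw [Nat.sub_add_cancel h.1]; exact h.2
          set q0 : ι := ⟨⟨q.1.val - 1, by have := q.1.isLt; omega⟩, ⟨q.2.val, hq2⟩⟩ with hq0def
          rw [hAstep q q0 (by simp [hq0def]; omega) (by rw [hq0def])]
          rw [inner_smul_right, hite p q0]
          have hne : p ≠ q0 := by
            intro hcon
            apply hrel
            have e1 := congrArg (fun r : ι => r.1.val) hcon
            have e2 := congrArg (fun r : ι => r.2.val) hcon
            simp only [hq0def] at e1 e2
            constructor
            · omega
            · simpa using e2
          rw [if_neg hne, mul_zero]
        · rw [hAzero q h, inner_zero_right]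
      rw [hL, hRz]
  -- ### assemble S2 and S3
  set S2 : V →ₗ[ℂ] V := (2⁻¹ : ℂ) • (A + A') with hS2def
  set S3 : V →ₗ[ℂ] V := (-(Complex.I) / 2) • (A - A') with hS3def
  have hstarA : LinearMap.adjoint A = A' := hadj.symm
  have hstarA' : LinearMap.adjoint A' = A := by rw [hadj, LinearMap.adjoint_adjoint]
  have h2sym : S2.IsSymmetric := by
    rw [LinearMap.isSymmetric_iff_isSelfAdjoint]
    show star S2 = S2
    rw [hS2def, star_smul, star_add, LinearMap.star_eq_adjoint, LinearMap.star_eq_adjoint,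
      hstarA, hstarA']
    have hst : star (2⁻¹ : ℂ) = 2⁻¹ := by norm_num
    rw [hst, add_comm A' A]
  have h3sym : S3.IsSymmetric := by
    rw [LinearMap.isSymmetric_iff_isSelfAdjoint]
    show star S3 = S3
    rw [hS3def, star_smul, star_sub, LinearMap.star_eq_adjoint, LinearMap.star_eq_adjoint,
      hstarA, hstarA']
    have hsc : star (-(Complex.I) / 2) = Complex.I / 2 := by
      rw [star_div₀, star_neg, Complex.star_def, Complex.conj_I, map_ofNat, neg_neg]
    rw [hsc]
    module
  refine ⟨S2, S3, h2sym, h3sym, ?_, ?_, ?_⟩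
  · have e1 : S2 * S3 = (2⁻¹ * (-(Complex.I) / 2)) • ((A + A') * (A - A')) := by
      rw [hS2def, hS3def, smul_mul_assoc, mul_smul_comm, smul_smul]
    have e2 : S3 * S2 = (2⁻¹ * (-(Complex.I) / 2)) • ((A - A') * (A + A')) := by
      rw [hS2def, hS3def, smul_mul_assoc, mul_smul_comm, smul_smul,
        mul_comm (-(Complex.I) / 2) (2⁻¹ : ℂ)]
    rw [e1, e2, ← smul_sub]
    have key1 : (A + A') * (A - A') - (A - A') * (A + A') =
        (A' * A - A * A') + (A' * A - A * A') := by noncomm_ring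
    rw [key1]
    have hX : A' * A - A * A' = (-((2 * c : ℝ) : ℂ)) • S1 := by
      rw [← neg_sub (A * A') (A' * A), hR3, neg_smul]
    rw [hX, ← add_smul, smul_smul]
    congr 1
    push_cast
    ring
  · have e1 : S3 * S1 = (-(Complex.I) / 2) • ((A - A') * S1) := by
      rw [hS3def, smul_mul_assoc]
    have e2 : S1 * S3 = (-(Complex.I) / 2) • (S1 * (A - A')) := by
      rw [hS3def, mul_smul_comm]
    rw [e1, e2, ← smul_sub]
    have key2 : (A - A') * S1 - S1 * (A - A') =
        -(S1 * A - A * S1) + (S1 * A' - A' * S1) := by noncomm_ring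
    rw [key2, hR1, hR2, hS2def]
    match_scalars <;> push_cast <;> ring
  · have e1 : S1 * S2 = (2⁻¹ : ℂ) • (S1 * (A + A')) := by
      rw [hS2def, mul_smul_comm]
    have e2 : S2 * S1 = (2⁻¹ : ℂ) • ((A + A') * S1) := by
      rw [hS2def, smul_mul_assoc]
    rw [e1, e2, ← smul_sub]
    have key3 : S1 * (A + A') - (A + A') * S1 =
        (S1 * A - A * S1) + (S1 * A' - A' * S1) := by noncomm_ring
    rw [key3, hR1, hR2, hS3def]
    match_scalars <;> push_cast <;>
      first
        | linear_combination (c : ℂ) * Complex.I_sq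
        | linear_combination (-(c : ℂ)) * Complex.I_sq
        | linear_combination ((c : ℂ) / 2) * Complex.I_sq
        | linear_combination (-(c : ℂ) / 2) * Complex.I_sq
        | ring
set_option maxHeartbeats 1000000 in
/-- Let `S1` be self-adjoint with distinct eigenvalues
`λ 1 > … > λ n` (`n ≥ 2`) that are homogeneously gapped with gap `c > 0` and symmetric
(`λ k = -λ (n+1-k)`), and suppose the eigenspace dimensions `d k` satisfy
`d k ≤ d (k+1)` for `1 ≤ k ≤ ⌊n/2⌋` and `d k = d (n+1-k)` for all `k`. Then there exist
self-adjoint operators `S2, S3` such that `(S1, S2, S3)` satisfies the su(2) relations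
with constant `c`. -/
theorem su2_generators_exist
    {V : Type*} [NormedAddCommGroup V] [InnerProductSpace ℂ V] [FiniteDimensional ℂ V]
    (n : ℕ) (hn : 2 ≤ n) (c : ℝ) (hc : 0 < c) (lam : ℕ → ℝ)
    (hgap : ∀ k, 1 ≤ k → k ≤ n - 1 → lam k - lam (k + 1) = c)
    (hsym : ∀ k, 1 ≤ k → k ≤ n → lam k = -lam (n + 1 - k))
    (S1 : V →ₗ[ℂ] V) (h1 : S1.IsSymmetric)
    (heig : ∀ k, 1 ≤ k → k ≤ n → Module.End.HasEigenvalue S1 ((lam k : ℝ) : ℂ))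
    (hall : ∀ μ : ℂ, Module.End.HasEigenvalue S1 μ → ∃ k, 1 ≤ k ∧ k ≤ n ∧ μ = ((lam k : ℝ) : ℂ))
    (hmono : ∀ k, 1 ≤ k → k ≤ n / 2 →
      Module.finrank ℂ (Module.End.eigenspace S1 ((lam k : ℝ) : ℂ)) ≤
        Module.finrank ℂ (Module.End.eigenspace S1 ((lam (k + 1) : ℝ) : ℂ)))
    (hdsym : ∀ k, 1 ≤ k → k ≤ n →
      Module.finrank ℂ (Module.End.eigenspace S1 ((lam k : ℝ) : ℂ)) =
        Module.finrank ℂ (Module.End.eigenspace S1 ((lam (n + 1 - k) : ℝ) : ℂ))) :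
    ∃ S2 S3 : V →ₗ[ℂ] V, S2.IsSymmetric ∧ S3.IsSymmetric ∧
      S2 * S3 - S3 * S2 = (Complex.I * (c : ℂ)) • S1 ∧
      S3 * S1 - S1 * S3 = (Complex.I * (c : ℂ)) • S2 ∧
      S1 * S2 - S2 * S1 = (Complex.I * (c : ℂ)) • S3 := by
  classical
  -- ### Step 1: the eigenvalue formula
  have hgap' : ∀ k, 2 ≤ k → k ≤ n → lam (k - 1) - lam k = c := by
    intro k h2 hkn
    have h := hgap (k - 1) (by omega) (by omega)
    have hk : k - 1 + 1 = k := by omega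
    rwa [hk] at h
  have hlin : ∀ k, 1 ≤ k → k ≤ n → lam k = lam 1 - ((k : ℝ) - 1) * c := by
    intro k
    induction k with
    | zero => intro h; exact absurd h (by norm_num)
    | succ m ih =>
      intro _ h2
      rcases Nat.eq_zero_or_pos m with hm | hm
      · subst hm; norm_num
      · have hg := hgap m hm (by omega)
        have hih := ih hm (by omega)
        push_cast
        push_cast at hih
        linarith
  have hlam : ∀ k, 1 ≤ k → k ≤ n → lam k = c * ((n : ℝ) + 1 - 2 * k) / 2 := by
    intro k hk1 hk2
    have h1n : lam 1 = -lam n := by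
      have h := hsym 1 le_rfl (by omega)
      simpa using h
    have hn' := hlin n (by omega) le_rfl
    have hk' := hlin k hk1 hk2
    rw [hk']
    have hl1 : lam 1 = ((n : ℝ) - 1) * c / 2 := by linarith
    rw [hl1]; ring
  have hlaminj : ∀ k l, 1 ≤ k → k ≤ n → 1 ≤ l → l ≤ n → lam k = lam l → k = l := by
    intro k l hk1 hk2 hl1 hl2 h
    rw [hlam k hk1 hk2, hlam l hl1 hl2] at h
    have hc' : c ≠ 0 := ne_of_gt hc
    have h2 : c * ((n : ℝ) + 1 - 2 * k) = c * ((n : ℝ) + 1 - 2 * l) := by linarith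
    have h3 : ((n : ℝ) + 1 - 2 * k) = ((n : ℝ) + 1 - 2 * l) := mul_left_cancel₀ hc' h2
    have h4 : (k : ℝ) = l := by linarith
    exact_mod_cast h4
  -- ### Step 2: dimension bookkeeping
  set E : ℕ → Submodule ℂ V := fun k => Module.End.eigenspace S1 ((lam k : ℝ) : ℂ) with hE
  set D : ℕ → ℕ := fun k => finrank ℂ (E k) with hD
  have hmono' : ∀ k, 1 ≤ k → k ≤ n / 2 → D k ≤ D (k + 1) := hmono
  have hdsym' : ∀ k, 1 ≤ k → k ≤ n → D k = D (n + 1 - k) := hdsym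
  have hDmono : ∀ j k, 1 ≤ j → j ≤ k → 2 * k ≤ n + 1 → D j ≤ D k := by
    intro j k hj hjk
    induction k, hjk using Nat.le_induction with
    | base => intro _; exact le_rfl
    | succ k hk ih =>
      intro h2k
      exact (ih (by omega)).trans (hmono' k (by omega) (by omega))
  have hDmin : ∀ k, 1 ≤ k → k ≤ n → D k = D (min k (n + 1 - k)) := by
    intro k hk1 hk2
    rcases le_or_gt k (n + 1 - k) with h | h
    · rw [min_eq_left h]
    · rw [min_eq_right h.le, hdsym' k hk1 hk2]
  set a : ℕ → ℕ := fun i => sInf {m | 1 ≤ m ∧ i < D m} with ha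
  have haSpec : ∀ k i, 1 ≤ k → k ≤ n → i < D k →
      1 ≤ a i ∧ i < D (a i) ∧ a i ≤ min k (n + 1 - k) := by
    intro k i hk1 hk2 hi
    have hne : {m | 1 ≤ m ∧ i < D m}.Nonempty := ⟨k, hk1, hi⟩
    have hmem := Nat.sInf_mem hne
    have hle : a i ≤ min k (n + 1 - k) := by
      apply Nat.sInf_le
      refine ⟨by omega, ?_⟩
      rw [← hDmin k hk1 hk2]; exact hi
    exact ⟨hmem.1, hmem.2, hle⟩
  have hvalid_up : ∀ k i, 1 ≤ k → k ≤ n → i < D k → a i < k → i < D (k - 1) := by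
    intro k i hk1 hk2 hi hak
    obtain ⟨ha1, hia, hale⟩ := haSpec k i hk1 hk2 hi
    have h2' : a i ≤ n + 1 - k := le_trans hale (min_le_right _ _)
    have hm : a i ≤ min (k - 1) (n + 1 - (k - 1)) := le_min (by omega) (by omega)
    calc i < D (a i) := hia
      _ ≤ D (min (k - 1) (n + 1 - (k - 1))) := by
          apply hDmono _ _ ha1 hm
          have h5 := min_le_left (k - 1) (n + 1 - (k - 1))
          have h6 := min_le_right (k - 1) (n + 1 - (k - 1))
          omega
      _ = D (k - 1) := (hDmin (k - 1) (by omega) (by omega)).symm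
  have hvalid_dn : ∀ k i, 1 ≤ k → k ≤ n → i < D k → k < n + 1 - a i →
      i < D (k + 1) ∧ k + 1 ≤ n := by
    intro k i hk1 hk2 hi hak
    obtain ⟨ha1, hia, hale⟩ := haSpec k i hk1 hk2 hi
    have h2' : a i ≤ k := le_trans hale (min_le_left _ _)
    have hkn : k + 1 ≤ n := by omega
    have hm : a i ≤ min (k + 1) (n + 1 - (k + 1)) := le_min (by omega) (by omega)
    refine ⟨?_, hkn⟩
    calc i < D (a i) := hia
      _ ≤ D (min (k + 1) (n + 1 - (k + 1))) := by
          apply hDmono _ _ ha1 hm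
          have h5 := min_le_left (k + 1) (n + 1 - (k + 1))
          have h6 := min_le_right (k + 1) (n + 1 - (k + 1))
          omega
      _ = D (k + 1) := (hDmin (k + 1) (by omega) (by omega)).symm
  -- ### Step 3: the ladder coefficients
  set t : ℕ → ℕ → ℝ :=
      fun k i => Real.sqrt (c ^ 2 * (((k - a i) * (n + 2 - (a i + k)) : ℕ) : ℝ)) with htdef
  have htsq : ∀ k i, t k i * t k i = c ^ 2 * (((k - a i) * (n + 2 - (a i + k)) : ℕ) : ℝ) := by
    intro k i
    rw [htdef]
    exact Real.mul_self_sqrt (by positivity)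
  have htzero : ∀ k i, (k ≤ a i ∨ n + 1 < a i + k) → t k i = 0 := by
    intro k i h
    have h0 : ((k - a i) * (n + 2 - (a i + k)) : ℕ) = 0 := by
      rcases h with h | h
      · simp [Nat.sub_eq_zero_of_le h]
      · have hz : n + 2 - (a i + k) = 0 := by omega
        simp [hz]
    rw [htdef]; simp [h0]
  have htne : ∀ k i, t k i ≠ 0 → a i < k ∧ a i + k ≤ n + 1 := by
    intro k i h
    by_contra hcon
    exact h (htzero k i (by omega))
  have htrec : ∀ k i, 1 ≤ k → k ≤ n → i < D k →
      t (k + 1) i * t (k + 1) i - t k i * t k i = 2 * c * lam k := by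
    intro k i hk1 hk2 hi
    obtain ⟨ha1, _, hale⟩ := haSpec k i hk1 hk2 hi
    have hak : a i ≤ k := le_trans hale (min_le_left _ _)
    have hkn : a i + k ≤ n + 1 := by
      have := le_trans hale (min_le_right _ _); omega
    rw [htsq, htsq, hlam k hk1 hk2]
    push_cast [Nat.cast_sub (show a i ≤ k + 1 by omega), Nat.cast_sub hak,
      Nat.cast_sub (show a i + (k + 1) ≤ n + 2 by omega),
      Nat.cast_sub (show a i + k ≤ n + 2 by omega)]
    ring
  -- ### Step 4: spectral decomposition and orthonormal basis
  set F : Fin n → Submodule ℂ V := fun k => E (k.val + 1) with hF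
  have hinj : Function.Injective (fun k : Fin n => ((lam (k.val + 1) : ℝ) : ℂ)) := by
    intro k l h
    have hbeta : ((lam (k.val + 1) : ℝ) : ℂ) = ((lam (l.val + 1) : ℝ) : ℂ) := h
    have h' : lam (k.val + 1) = lam (l.val + 1) := by exact_mod_cast hbeta
    have hk := k.isLt
    have hl := l.isLt
    have := hlaminj (k.val + 1) (l.val + 1) (by omega) (by omega) (by omega) (by omega) h'
    exact Fin.ext (by omega)
  have hFam : OrthogonalFamily ℂ (fun k : Fin n => F k) (fun k => (F k).subtypeₗᵢ) :=
    h1.orthogonalFamily_eigenspaces.comp hinj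
  have hsupE : (⨆ k : Fin n, F k) = ⨆ μ : ℂ, Module.End.eigenspace S1 μ := by
    apply le_antisymm
    · exact iSup_le fun k => le_iSup (fun μ => Module.End.eigenspace S1 μ) _
    · refine iSup_le fun μ => ?_
      by_cases hμ : Module.End.eigenspace S1 μ = ⊥
      · rw [hμ]; exact bot_le
      · obtain ⟨k, hk1, hk2, rfl⟩ := hall μ (Module.End.hasEigenvalue_iff.mpr hμ)
        refine le_trans (le_of_eq ?_) (le_iSup F ⟨k - 1, by omega⟩)
        show E k = E (k - 1 + 1)
        rw [Nat.sub_add_cancel hk1]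
  have hisint : DirectSum.IsInternal F := by
    apply hFam.isInternal_iff.mpr
    rw [hsupE]
    exact h1.orthogonalComplement_iSup_eigenspaces_eq_bot
  set b : OrthonormalBasis (Σ k : Fin n, Fin (D (k.val + 1))) ℂ V :=
    hisint.collectedOrthonormalBasis hFam (fun k => stdOrthonormalBasis ℂ (F k)) with hbdef
  have hbmem : ∀ p : (Σ k : Fin n, Fin (D (k.val + 1))), b p ∈ F p.1 := fun p =>
    hisint.collectedOrthonormalBasis_mem hFam _ p
  have hS1b : ∀ p : (Σ k : Fin n, Fin (D (k.val + 1))),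
      S1 (b p) = ((lam (p.1.val + 1) : ℝ) : ℂ) • b p := fun p =>
    Module.End.mem_eigenspace_iff.mp (hbmem p)
  have hisLt : ∀ p : (Σ k : Fin n, Fin (D (k.val + 1))), p.2.val < D (p.1.val + 1) :=
    fun p => p.2.isLt
  -- ### Step 5: feed the ladder construction
  have hrec' : ∀ p : (Σ k : Fin n, Fin (D (k.val + 1))),
      t (p.1.val + 2) p.2.val * t (p.1.val + 2) p.2.val
        - t (p.1.val + 1) p.2.val * t (p.1.val + 1) p.2.val = 2 * c * lam (p.1.val + 1) := by
    intro p
    have hk := p.1.isLt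
    have h := htrec (p.1.val + 1) p.2.val (by omega) (by omega) (hisLt p)
    have he : p.1.val + 1 + 1 = p.1.val + 2 := rfl
    rwa [he] at h
  have hup' : ∀ p : (Σ k : Fin n, Fin (D (k.val + 1))), t (p.1.val + 1) p.2.val ≠ 0 →
      1 ≤ p.1.val ∧ p.2.val < D p.1.val := by
    intro p h0
    obtain ⟨ha1, ha2⟩ := htne _ _ h0
    have hk := p.1.isLt
    obtain ⟨hA1, -, -⟩ := haSpec (p.1.val + 1) p.2.val (by omega) (by omega) (hisLt p)
    have hup2 := hvalid_up (p.1.val + 1) p.2.val (by omega) (by omega) (hisLt p) (by omega)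
    rw [Nat.add_sub_cancel] at hup2
    exact ⟨by omega, hup2⟩
  have hdn' : ∀ p : (Σ k : Fin n, Fin (D (k.val + 1))), t (p.1.val + 2) p.2.val ≠ 0 →
      p.1.val + 1 < n ∧ p.2.val < D (p.1.val + 2) := by
    intro p h0
    obtain ⟨ha1, ha2⟩ := htne _ _ h0
    have hk := p.1.isLt
    obtain ⟨hdn1, hdn2⟩ := hvalid_dn (p.1.val + 1) p.2.val (by omega) (by omega)
      (hisLt p) (by omega)
    exact ⟨by omega, hdn1⟩
  exact ladder_construction n c D b S1 lam t hS1b hgap' hrec' hup' hdn'
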